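/- arXiv:1407.5446 — 6 statements merged into one kernel-verified Lean document; each statement's English description precedes it below -/
import Mathlib

section
/- If R is an fppf-local ring and 𝔭 ⊂ R is a prime ideal, then 𝔭ⁿ = 𝔭 for every integer n ≥ 1. -/
universe u

/-- A commutative ring is *fppf-local* if it is local and every faithfully flat
ring homomorphism of finite presentation out of it admits a retraction. -/
def FppfLocal (R : Type u) [CommRing R] : Prop :=
  IsLocalRing R ∧
    ∀ (B : Type u) [CommRing B] (f : R →+* B),
      f.FinitePresentation →
      (letI : Algebra R B := f.toAlgebra; Module.FaithfullyFlat R B) →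
      ∃ g : B →+* R, g.comp f = RingHom.id R

/-- A commutative ring is *absolutely integrally closed* (AIC) if every monic
polynomial over it has a root. -/
def IsAIC (R : Type*) [CommRing R] : Prop :=
  ∀ f : Polynomial R, f.Monic → ∃ x : R, f.IsRoot x

lemma fppf_sq_root (R : Type u) [CommRing R]
    (hR : FppfLocal R) (a : R) : ∃ b : R, b ^ 2 = a := by
  obtain ⟨hloc, h⟩ := hR
  set q : Polynomial R := Polynomial.X ^ 2 - Polynomial.C a with hq
  have hmonic : q.Monic := Polynomial.monic_X_pow_sub_C a (by norm_num)
  let B := AdjoinRoot q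
  have halg : (algebraMap R B).toAlgebra = (inferInstance : Algebra R B) := by
    apply Algebra.algebra_ext
    intro r
    rfl
  have hfree : Module.Free R B := Module.Free.of_basis (AdjoinRoot.powerBasis' hmonic).basis
  have hdim : 0 < (AdjoinRoot.powerBasis' hmonic).dim := by
    rw [AdjoinRoot.powerBasis'_dim, hq, Polynomial.natDegree_X_pow_sub_C]
    norm_num
  have hnt : Nontrivial B :=
    nontrivial_of_ne ((AdjoinRoot.powerBasis' hmonic).basis ⟨0, hdim⟩) 0 (Module.Basis.ne_zero _ _)
  have hff : (letI : Algebra R B := (algebraMap R B).toAlgebra; Module.FaithfullyFlat R B) := by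
    rw [halg]; infer_instance
  have hfp : (algebraMap R B).FinitePresentation := by
    show @Algebra.FinitePresentation R B _ _ (algebraMap R B).toAlgebra
    rw [halg]; exact AdjoinRoot.finitePresentation q
  obtain ⟨g, hg⟩ := h B (algebraMap R B) hfp hff
  refine ⟨g (AdjoinRoot.root q), ?_⟩
  have : (AdjoinRoot.root q) ^ 2 = algebraMap R B a := by
    have := AdjoinRoot.isRoot_root q
    simp [hq, Polynomial.IsRoot, sub_eq_zero] at this
    exact (by simpa [AdjoinRoot.algebraMap_eq] using this : (AdjoinRoot.root q) ^ 2 = algebraMap R (AdjoinRoot q) a)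
  calc g (AdjoinRoot.root q) ^ 2 = g ((AdjoinRoot.root q) ^ 2) := by rw [map_pow]
    _ = g (algebraMap R B a) := by rw [this]
    _ = a := RingHom.congr_fun hg a

theorem fppfLocal_prime_pow_eq (R : Type u) [CommRing R] (hR : FppfLocal R)
    (p : Ideal R) [p.IsPrime] : ∀ n : ℕ, 1 ≤ n → p ^ n = p := by
  have hsq : p ^ 2 = p := by
    refine le_antisymm (Ideal.pow_le_self two_ne_zero) ?_
    intro a ha
    obtain ⟨b, hb⟩ := fppf_sq_root R hR a
    have hbp : b ∈ p := by
      have : b * b ∈ p := by rwa [← sq, hb]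
      exact (Ideal.IsPrime.mem_or_mem ‹_› this).elim id id
    rw [← hb, sq, sq]
    exact Ideal.mul_mem_mul hbp hbp
  intro n hn
  induction n with
  | zero => omega
  | succ m ih =>
    rcases Nat.eq_or_lt_of_le hn with h1 | h1
    · simp [← h1]
    · have hm : 1 ≤ m := by omega
      rw [pow_succ, ih hm, ← sq, hsq]
end

section
/- A commutative ring is fppf-local and noetherian if and only if it is an algebraically closed field. -/
universe u

/-- In an fppf-local ring, every monic polynomial of positive degree has a root. -/
lemma exists_root_of_fppfLocal {R : Type u} [CommRing R] (h : FppfLocal R)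
    (p : Polynomial R) (hp : p.Monic) (hd : 0 < p.natDegree) : ∃ x : R, p.IsRoot x := by
  obtain ⟨hloc, hret⟩ := h
  haveI : Nontrivial R := inferInstance
  set B := AdjoinRoot p with hB
  have halg : (algebraMap R B).toAlgebra = (inferInstance : Algebra R B) :=
    Algebra.algebra_ext _ _ fun r => rfl
  -- B is a free R-module with basis of size natDegree p > 0, hence nontrivial
  haveI : Nontrivial B := by
    have b := (AdjoinRoot.powerBasis' hp).basis
    have hdim : (AdjoinRoot.powerBasis' hp).dim = p.natDegree := rfl
    haveI : Nontrivial (Fin (AdjoinRoot.powerBasis' hp).dim →₀ R) := by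
      haveI : Nonempty (Fin (AdjoinRoot.powerBasis' hp).dim) := by
        rw [hdim]; exact ⟨⟨0, hd⟩⟩
      infer_instance
    exact b.repr.toEquiv.nontrivial
  haveI : Module.Free R B := Module.Free.of_basis (AdjoinRoot.powerBasis' hp).basis
  haveI hff : Module.FaithfullyFlat R B := inferInstance
  haveI hfpres : Algebra.FinitePresentation R B := by
    show Algebra.FinitePresentation R (Polynomial R ⧸ (Ideal.span {p}))
    exact Algebra.FinitePresentation.quotient
      (Submodule.fg_span (Set.finite_singleton p))
  obtain ⟨g, hg⟩ := hret B (algebraMap R B)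
    (by rw [RingHom.FinitePresentation]; exact halg ▸ hfpres)
    (by exact halg ▸ hff)
  refine ⟨g (AdjoinRoot.root p), ?_⟩
  have := AdjoinRoot.eval₂_root p
  have h2 : g (p.eval₂ (AdjoinRoot.of p) (AdjoinRoot.root p)) = 0 := by rw [this]; simp
  rw [Polynomial.hom_eval₂, ← AdjoinRoot.algebraMap_eq, hg] at h2
  exact h2

theorem fppfLocal_noetherian_iff_algClosed_field (R : Type u) [CommRing R] :
    (FppfLocal R ∧ IsNoetherianRing R) ↔
      ∃ hf : IsField R, @IsAlgClosed R hf.toField := by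
  constructor
  · rintro ⟨hfppf, hnoeth⟩
    haveI hloc : IsLocalRing R := hfppf.1
    -- every element has a square root
    have hsq : ∀ a : R, ∃ b : R, b * b = a := by
      intro a
      obtain ⟨x, hx⟩ := exists_root_of_fppfLocal hfppf (Polynomial.X ^ 2 - Polynomial.C a)
        (Polynomial.monic_X_pow_sub_C a two_ne_zero)
        (by rw [Polynomial.natDegree_X_pow_sub_C]; norm_num)
      refine ⟨x, ?_⟩
      have := hx
      simp only [Polynomial.IsRoot, Polynomial.eval_sub, Polynomial.eval_pow,
        Polynomial.eval_X, Polynomial.eval_C, sub_eq_zero] at this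
      rw [← this]; ring
    -- maximal ideal squared equals itself, so it's zero by Nakayama
    have hm : IsLocalRing.maximalIdeal R = ⊥ := by
      refine Submodule.eq_bot_of_le_smul_of_le_jacobson_bot (IsLocalRing.maximalIdeal R)
        (IsLocalRing.maximalIdeal R) (IsNoetherian.noetherian _) ?_ ?_
      · intro a ha
        obtain ⟨b, hb⟩ := hsq a
        have hbm : b ∈ IsLocalRing.maximalIdeal R :=
          ((IsLocalRing.maximalIdeal.isMaximal R).isPrime.mul_mem_iff_mem_or_mem.mp
            (hb ▸ ha)).elim id id
        rw [smul_eq_mul]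
        exact hb ▸ Ideal.mul_mem_mul hbm hbm
      · rw [IsLocalRing.jacobson_eq_maximalIdeal ⊥ bot_ne_top]
    have hf : IsField R := IsLocalRing.isField_iff_maximalIdeal_eq.mpr hm
    refine ⟨hf, ?_⟩
    letI := hf.toField
    exact IsAlgClosed.of_exists_root R fun q hq hirr => by
      obtain ⟨x, hx⟩ := exists_root_of_fppfLocal hfppf q hq
        (hq.natDegree_pos.mpr (fun h1 => hirr.not_isUnit (h1 ▸ isUnit_one)))
      exact ⟨x, hx⟩
  · rintro ⟨hf, halg⟩
    letI := hf.toField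
    haveI := halg
    refine ⟨⟨inferInstance, ?_⟩, inferInstance⟩
    intro B _ f hfp hff
    letI : Algebra R B := f.toAlgebra
    haveI : Module.FaithfullyFlat R B := hff
    haveI : Nontrivial B := by
      by_contra hB
      rw [not_nontrivial_iff_subsingleton] at hB
      obtain ⟨m, hm⟩ := Ideal.exists_maximal R
      exact Module.FaithfullyFlat.submodule_ne_top (R := R) (M := B) hm
        (Subsingleton.elim _ _)
    obtain ⟨n, hn⟩ := Ideal.exists_maximal B
    haveI := hn
    letI : Field (B ⧸ n) := Ideal.Quotient.field n
    haveI : Algebra.FiniteType R B := RingHom.FiniteType.of_finitePresentation hfp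
    haveI : Algebra.FiniteType R (B ⧸ n) :=
      Algebra.FiniteType.of_surjective (Ideal.Quotient.mkₐ R n)
        (Ideal.Quotient.mkₐ_surjective R n)
    haveI : Module.Finite R (B ⧸ n) := finite_of_finite_type_of_isJacobsonRing R (B ⧸ n)
    haveI : Algebra.IsIntegral R (B ⧸ n) := Algebra.IsIntegral.of_finite R (B ⧸ n)
    have hsurj : Function.Surjective (algebraMap R (B ⧸ n)) :=
      IsAlgClosed.algebraMap_bijective_of_isIntegral.2
    have hinj : Function.Injective (algebraMap R (B ⧸ n)) :=
      (algebraMap R (B ⧸ n)).injective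
    let e : R ≃+* (B ⧸ n) := RingEquiv.ofBijective (algebraMap R (B ⧸ n)) ⟨hinj, hsurj⟩
    refine ⟨(e.symm : (B ⧸ n) →+* R).comp (Ideal.Quotient.mk n), ?_⟩
    ext x
    have : (Ideal.Quotient.mk n) (f x) = algebraMap R (B ⧸ n) x := by
      rw [IsScalarTower.algebraMap_apply R B (B ⧸ n)]
      rfl
    simp only [RingHom.comp_apply, RingHom.id_apply, this]
    exact e.symm_apply_apply x
end

section
/- A local ring A is henselian if and only if A/𝔮 is henselian for every minimal prime ideal 𝔮 ⊂ A. -/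
open Polynomial IsLocalRing

section Aux

variable {A : Type*} [CommRing A] [IsLocalRing A]

private lemma mk_not_isUnit {q : Ideal A} (hq : q ≤ maximalIdeal A) {x : A}
    (hx : x ∈ maximalIdeal A) : ¬ IsUnit (Ideal.Quotient.mk q x) := by
  intro h
  obtain ⟨y, hy⟩ := h.exists_right_inv
  obtain ⟨z, rfl⟩ := Ideal.Quotient.mk_surjective y
  rw [← map_mul, ← map_one (Ideal.Quotient.mk q), Ideal.Quotient.mk_eq_mk_iff_sub_mem] at hy
  have h1 : (1 : A) ∈ maximalIdeal A := by
    have := (maximalIdeal A).sub_mem ((maximalIdeal A).mul_mem_right z hx) (hq hy)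
    simpa using this
  exact (maximalIdeal.isMaximal A).ne_top ((Ideal.eq_top_iff_one _).mpr h1)

private lemma mem_max_of_mk_mem {q : Ideal A} [IsLocalRing (A ⧸ q)] {x : A}
    (hx : Ideal.Quotient.mk q x ∈ maximalIdeal (A ⧸ q)) : x ∈ maximalIdeal A := by
  rw [mem_maximalIdeal, mem_nonunits_iff] at hx ⊢
  exact fun h => hx (h.map _)

private lemma eval_mem_max {f : A[X]} {a₀ b : A} (ha₀ : f.eval a₀ ∈ maximalIdeal A)
    (hb : b - a₀ ∈ maximalIdeal A) : f.eval b ∈ maximalIdeal A := by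
  obtain ⟨t, ht⟩ := sub_dvd_eval_sub b a₀ f
  have : f.eval b = (b - a₀) * t + f.eval a₀ := by rw [← ht]; ring
  rw [this]
  exact (maximalIdeal A).add_mem ((maximalIdeal A).mul_mem_right t hb) ha₀

private lemma deriv_unit {f : A[X]} {a₀ b : A} (hu : IsUnit (f.derivative.eval a₀))
    (hb : b - a₀ ∈ maximalIdeal A) : IsUnit (f.derivative.eval b) := by
  by_contra h
  rw [← mem_nonunits_iff, ← mem_maximalIdeal] at h
  obtain ⟨t, ht⟩ := sub_dvd_eval_sub b a₀ f.derivative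
  have : f.derivative.eval a₀ ∈ maximalIdeal A := by
    have : f.derivative.eval a₀ = f.derivative.eval b - (b - a₀) * t := by rw [← ht]; ring
    rw [this]
    exact (maximalIdeal A).sub_mem h ((maximalIdeal A).mul_mem_right t hb)
  rw [mem_maximalIdeal, mem_nonunits_iff] at this
  exact this hu

/-- Newton's step: improve a root modulo `J` to a root modulo `J ^ 2`. -/
private lemma newton_step {f : A[X]} {a₀ : A} (ha₀ : f.eval a₀ ∈ maximalIdeal A)
    (hu : IsUnit (f.derivative.eval a₀)) {b : A} (hb : b - a₀ ∈ maximalIdeal A) :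
    ∃ b' : A, b' - a₀ ∈ maximalIdeal A ∧ (f.eval b) ^ 2 ∣ f.eval b' := by
  have hd : IsUnit (f.derivative.eval b) := deriv_unit hu hb
  set u : A := ↑hd.unit⁻¹ with hu_def
  have huu : f.derivative.eval b * u = 1 := hd.mul_val_inv
  obtain ⟨k, hk⟩ := f.binomExpansion b (-(f.eval b * u))
  refine ⟨b + -(f.eval b * u), ?_, ?_⟩
  · have : b + -(f.eval b * u) - a₀ = (b - a₀) - (f.eval b) * u := by ring
    rw [this]
    exact (maximalIdeal A).sub_mem hb
      ((maximalIdeal A).mul_mem_right u (eval_mem_max ha₀ hb))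
  · refine ⟨k * u ^ 2, ?_⟩
    rw [hk]
    have : f.derivative.eval b * -(f.eval b * u) =
        -(f.eval b * (f.derivative.eval b * u)) := by ring
    rw [this, huu]
    ring

/-- Glue a root modulo `J₁` and a root modulo `J₂` into a root modulo `J₁ ⊓ J₂`. -/
private lemma glue_roots {f : A[X]} {a₀ : A} (hu : IsUnit (f.derivative.eval a₀))
    {J₁ J₂ : Ideal A} (hJ₁ : J₁ ≤ maximalIdeal A) {a₁ a₂ : A}
    (h₁m : a₁ - a₀ ∈ maximalIdeal A) (h₂m : a₂ - a₀ ∈ maximalIdeal A)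
    (h₁ : f.eval a₁ ∈ J₁) (h₂ : f.eval a₂ ∈ J₂) :
    ∃ b : A, b - a₀ ∈ maximalIdeal A ∧ f.eval b ∈ J₁ ∧ f.eval b ∈ J₂ := by
  obtain ⟨k, hk⟩ := f.binomExpansion a₂ (a₁ - a₂)
  rw [add_sub_cancel] at hk
  -- f.eval a₁ - f.eval a₂ = (a₁ - a₂) * w with w a unit
  set w : A := f.derivative.eval a₂ + k * (a₁ - a₂) with hw_def
  have hy : a₁ - a₂ ∈ maximalIdeal A := by
    have : a₁ - a₂ = (a₁ - a₀) - (a₂ - a₀) := by ring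
    rw [this]; exact (maximalIdeal A).sub_mem h₁m h₂m
  have hwu : IsUnit w := by
    by_contra h
    rw [← mem_nonunits_iff, ← mem_maximalIdeal] at h
    have : f.derivative.eval a₂ ∈ maximalIdeal A := by
      have : f.derivative.eval a₂ = w - k * (a₁ - a₂) := by rw [hw_def]; ring
      rw [this]
      exact (maximalIdeal A).sub_mem h ((maximalIdeal A).mul_mem_left k hy)
    rw [mem_maximalIdeal, mem_nonunits_iff] at this
    exact this (deriv_unit hu h₂m)
  have hkey : a₁ - a₂ = (f.eval a₁ - f.eval a₂) * ↑hwu.unit⁻¹ := by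
    have h1 : f.eval a₁ - f.eval a₂ = (a₁ - a₂) * w := by rw [hk]; ring
    have h2 : w * ↑hwu.unit⁻¹ = 1 := hwu.mul_val_inv
    rw [h1, mul_assoc, h2, mul_one]
  have hmem : a₁ - a₂ ∈ J₁ ⊔ J₂ := by
    rw [hkey]
    exact Ideal.mul_mem_right _ _
      (Submodule.sub_mem _ (Ideal.mem_sup_left h₁) (Ideal.mem_sup_right h₂))
  obtain ⟨x₁, hx₁, x₂, hx₂, hx⟩ := Submodule.mem_sup.mp hmem
  refine ⟨a₁ - x₁, ?_, ?_, ?_⟩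
  · have : a₁ - x₁ - a₀ = (a₁ - a₀) - x₁ := by ring
    rw [this]; exact (maximalIdeal A).sub_mem h₁m (hJ₁ hx₁)
  · obtain ⟨t, ht⟩ := sub_dvd_eval_sub (a₁ - x₁) a₁ f
    have : f.eval (a₁ - x₁) = (a₁ - x₁ - a₁) * t + f.eval a₁ := by rw [← ht]; ring
    rw [this]
    refine J₁.add_mem (J₁.mul_mem_right t ?_) h₁
    have : a₁ - x₁ - a₁ = -x₁ := by ring
    rw [this]; exact J₁.neg_mem hx₁
  · obtain ⟨t, ht⟩ := sub_dvd_eval_sub (a₁ - x₁) a₂ f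
    have : f.eval (a₁ - x₁) = (a₁ - x₁ - a₂) * t + f.eval a₂ := by rw [← ht]; ring
    rw [this]
    refine J₂.add_mem (J₂.mul_mem_right t ?_) h₂
    have : a₁ - x₁ - a₂ = x₂ := by
      have : x₂ = (a₁ - a₂) - x₁ := by rw [← hx]; ring
      rw [this]; ring
    rw [this]; exact hx₂

end Aux

theorem henselian_iff_quotients_minimalPrimes_henselian
    (A : Type*) [CommRing A] [IsLocalRing A] :
    HenselianLocalRing A ↔
      ∀ q ∈ minimalPrimes A, HenselianLocalRing (A ⧸ q) := by
  constructor
  · -- easy direction: quotients of a henselian local ring are henselian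
    intro hH q hq
    haveI : q.IsPrime := hq.1.1
    have hqm : q ≤ maximalIdeal A := le_maximalIdeal hq.1.1.ne_top
    haveI : Nontrivial (A ⧸ q) := Ideal.Quotient.nontrivial_iff.mpr hq.1.1.ne_top
    haveI : IsLocalRing (A ⧸ q) :=
      IsLocalRing.of_surjective' (Ideal.Quotient.mk q) Ideal.Quotient.mk_surjective
    constructor
    intro g hg b₀ hb₀ hub₀
    obtain ⟨f₀, hf₀⟩ := Polynomial.map_surjective _ (Ideal.Quotient.mk_surjective (I := q)) g
    obtain ⟨f, hmap, -, hmonic⟩ :=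
      Polynomial.lifts_and_natDegree_eq_and_monic ((Polynomial.mem_lifts _).mpr ⟨f₀, hf₀⟩) hg
    obtain ⟨a₀, rfl⟩ := Ideal.Quotient.mk_surjective b₀
    have heval : ∀ x : A, g.eval (Ideal.Quotient.mk q x) = Ideal.Quotient.mk q (f.eval x) := by
      intro x
      rw [← hmap, eval_map, Polynomial.eval₂_at_apply]
    have hderiv : g.derivative.eval (Ideal.Quotient.mk q a₀) =
        Ideal.Quotient.mk q (f.derivative.eval a₀) := by
      rw [← hmap, derivative_map, eval_map, Polynomial.eval₂_at_apply]
    have ha₀m : f.eval a₀ ∈ maximalIdeal A := by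
      by_contra h
      rw [mem_maximalIdeal, mem_nonunits_iff, not_not] at h
      rw [heval a₀] at hb₀
      rw [mem_maximalIdeal, mem_nonunits_iff] at hb₀
      exact hb₀ (h.map _)
    have hu : IsUnit (f.derivative.eval a₀) := by
      by_contra h
      rw [← mem_nonunits_iff, ← mem_maximalIdeal] at h
      rw [hderiv] at hub₀
      exact mk_not_isUnit hqm h hub₀
    obtain ⟨a, haroot, ham⟩ := hH.is_henselian f hmonic a₀ ha₀m hu
    refine ⟨Ideal.Quotient.mk q a, ?_, ?_⟩
    · show g.eval _ = 0
      rw [heval a, haroot.eq_zero, map_zero]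
    · rw [← map_sub, mem_maximalIdeal, mem_nonunits_iff]
      exact mk_not_isUnit hqm ham
  · -- hard direction
    intro H
    constructor
    intro f hf a₀ ha₀ hu
    -- the set of values of f at points congruent to a₀ mod the maximal ideal
    set R : Set A := {c : A | ∃ b : A, b - a₀ ∈ maximalIdeal A ∧ f.eval b = c} with hR_def
    -- every minimal prime contains an element of R
    have hmin : ∀ q ∈ minimalPrimes A, ∃ c ∈ R, c ∈ q := by
      intro q hq
      haveI hH := H q hq
      have hqm : q ≤ maximalIdeal A := le_maximalIdeal hq.1.1.ne_top
      have hb₀ : (f.map (Ideal.Quotient.mk q)).eval (Ideal.Quotient.mk q a₀) ∈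
          maximalIdeal (A ⧸ q) := by
        rw [eval_map, Polynomial.eval₂_at_apply, mem_maximalIdeal, mem_nonunits_iff]
        exact mk_not_isUnit hqm ha₀
      have hub₀ : IsUnit ((f.map (Ideal.Quotient.mk q)).derivative.eval
          (Ideal.Quotient.mk q a₀)) := by
        rw [derivative_map, eval_map, Polynomial.eval₂_at_apply]
        exact hu.map _
      obtain ⟨abar, habarroot, habarm⟩ :=
        hH.is_henselian (f.map (Ideal.Quotient.mk q)) (hf.map _) (Ideal.Quotient.mk q a₀) hb₀ hub₀
      obtain ⟨b, rfl⟩ := Ideal.Quotient.mk_surjective abar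
      refine ⟨f.eval b, ⟨b, ?_, rfl⟩, ?_⟩
      · rw [← map_sub] at habarm
        exact mem_max_of_mk_mem habarm
      · have := habarroot.eq_zero
        rw [eval_map, Polynomial.eval₂_at_apply] at this
        exact (Ideal.Quotient.eq_zero_iff_mem).mp this
    -- compactness: 0 is a finite product of elements of R
    have h0 : (0 : A) ∈ Submonoid.closure R := by
      by_contra h0
      have hdisj : Disjoint ((⊥ : Ideal A) : Set A) (Submonoid.closure R : Set A) := by
        rw [Set.disjoint_left]
        intro x hx
        rw [SetLike.mem_coe, Ideal.mem_bot] at hx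
        subst hx; exact h0
      obtain ⟨p, hp, -, hpdisj⟩ := Ideal.exists_le_prime_disjoint ⊥ (Submonoid.closure R) hdisj
      haveI := hp
      obtain ⟨q, hq, hqp⟩ := Ideal.exists_minimalPrimes_le (bot_le : (⊥ : Ideal A) ≤ p)
      obtain ⟨c, hcR, hcq⟩ := hmin q hq
      exact Set.disjoint_left.mp hpdisj (hqp hcq) (Submonoid.subset_closure hcR)
    obtain ⟨l, hl, hlp⟩ := Submonoid.exists_list_of_mem_closure h0
    -- glue: find a common approximate root modulo every element of the list
    have key : ∀ l' : List A, (∀ y ∈ l', y ∈ R) →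
        ∃ a : A, a - a₀ ∈ maximalIdeal A ∧ ∀ c ∈ l', c ∣ f.eval a := by
      intro l'
      induction l' with
      | nil => exact fun _ => ⟨a₀, by simp, by simp⟩
      | cons c t ih =>
        intro hmem
        obtain ⟨a, ham, hadvd⟩ := ih fun y hy => hmem y (List.mem_cons_of_mem c hy)
        obtain ⟨b, hbm, hbe⟩ := hmem c (List.mem_cons_self)
        have hcm : c ∈ maximalIdeal A := hbe ▸ eval_mem_max ha₀ hbm
        have hJ₁ : Ideal.span {c} ≤ maximalIdeal A := by
          rw [Ideal.span_le, Set.singleton_subset_iff]; exact hcm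
        obtain ⟨b', hb'm, hb'1, hb'2⟩ := glue_roots hu hJ₁ hbm ham
          (by rw [hbe]; exact Ideal.mem_span_singleton_self c)
          (show f.eval a ∈ ⨅ c' ∈ t, Ideal.span {c'} by
            simp only [Ideal.mem_iInf]
            intro c' hc'
            exact Ideal.mem_span_singleton.mpr (hadvd c' hc'))
        refine ⟨b', hb'm, ?_⟩
        intro c' hc'
        rcases List.mem_cons.mp hc' with h | h
        · subst h; exact Ideal.mem_span_singleton.mp hb'1
        · have := hb'2
          simp only [Ideal.mem_iInf] at this
          exact Ideal.mem_span_singleton.mp (this c' h)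
    obtain ⟨a, ham, hdvd⟩ := key l hl
    -- the value f.eval a is nilpotent
    have hprod : ∀ l' : List A, (∀ c ∈ l', c ∣ f.eval a) → l'.prod ∣ f.eval a ^ l'.length := by
      intro l'
      induction l' with
      | nil => simp
      | cons c t ih =>
        intro hmem
        rw [List.prod_cons, List.length_cons, pow_succ']
        exact mul_dvd_mul (hmem c (List.mem_cons_self))
          (ih fun y hy => hmem y (List.mem_cons_of_mem c hy))
    have hnil : f.eval a ^ l.length = 0 := by
      have := hprod l hdvd
      rw [hlp] at this
      exact zero_dvd_iff.mp this
    -- Newton iteration: kill the nilpotent value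
    have iter : ∀ t : ℕ, ∃ b : A, b - a₀ ∈ maximalIdeal A ∧ f.eval a ^ (2 ^ t) ∣ f.eval b := by
      intro t
      induction t with
      | zero => exact ⟨a, ham, by simpa using dvd_refl _⟩
      | succ t ih =>
        obtain ⟨b, hbm, hbd⟩ := ih
        obtain ⟨b', hb'm, hb'd⟩ := newton_step ha₀ hu hbm
        refine ⟨b', hb'm, ?_⟩
        have : f.eval a ^ 2 ^ (t + 1) = (f.eval a ^ 2 ^ t) ^ 2 := by
          rw [← pow_mul, pow_succ]
        rw [this]
        exact dvd_trans (pow_dvd_pow_of_dvd hbd 2) hb'd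
    obtain ⟨b, hbm, hbd⟩ := iter l.length
    have hzero : f.eval a ^ 2 ^ l.length = 0 := by
      have hle : l.length ≤ 2 ^ l.length := Nat.le_of_lt (Nat.lt_two_pow_self)
      calc f.eval a ^ 2 ^ l.length
          = f.eval a ^ l.length * f.eval a ^ (2 ^ l.length - l.length) := by
            rw [← pow_add, Nat.add_sub_cancel' hle]
        _ = 0 := by rw [hnil, zero_mul]
    rw [hzero, zero_dvd_iff] at hbd
    exact ⟨b, hbd, hbm⟩
end

section
/- If R is an fppf-local ring, then for every prime ideal 𝔭 ⊂ R the localization R_𝔭 is a henselian local ring with algebraically closed residue field. -/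
universe u

open Polynomial IsLocalRing

/-- Every monic polynomial of positive degree has a root. -/
def HasMonicRoots (R : Type*) [CommRing R] : Prop :=
  ∀ f : Polynomial R, f.Monic → 1 ≤ f.natDegree → ∃ x : R, f.IsRoot x

lemma fppfLocal_hasMonicRoots {R : Type u} [CommRing R] (hR : FppfLocal R) :
    HasMonicRoots R := by
  obtain ⟨hloc, hsplit⟩ := hR
  haveI := hloc
  intro f hf hdeg
  set B := AdjoinRoot f with hB
  letI pb : PowerBasis R B := AdjoinRoot.powerBasis' hf
  haveI : Module.Free R B := Module.Free.of_basis pb.basis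
  haveI : Nontrivial B := by
    have h0 : (0 : ℕ) < pb.dim := by
      simpa [pb, AdjoinRoot.powerBasis'_dim] using (by omega : 0 < f.natDegree)
    exact nontrivial_of_ne (pb.basis ⟨0, h0⟩) 0 (pb.basis.ne_zero _)
  have halg : (algebraMap R B).toAlgebra = (inferInstance : Algebra R B) :=
    Algebra.algebra_ext _ _ fun r => rfl
  have hfp : (algebraMap R B).FinitePresentation := by
    show @Algebra.FinitePresentation R B _ _ (algebraMap R B).toAlgebra
    rw [halg]
    exact AdjoinRoot.finitePresentation f
  have hff : (letI : Algebra R B := (algebraMap R B).toAlgebra;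
      Module.FaithfullyFlat R B) := by
    rw [halg]
    infer_instance
  obtain ⟨g, hg⟩ := hsplit B (algebraMap R B) hfp hff
  refine ⟨g (AdjoinRoot.root f), ?_⟩
  have hroot : f.eval₂ (algebraMap R B) (AdjoinRoot.root f) = 0 := by
    rw [AdjoinRoot.algebraMap_eq]
    exact AdjoinRoot.eval₂_root f
  have := congrArg g hroot
  rw [hom_eval₂, hg, map_zero] at this
  exact this

lemma hasMonicRoots_localization {R : Type u} [CommRing R] (h : HasMonicRoots R)
    (p : Ideal R) [p.IsPrime] : HasMonicRoots (Localization.AtPrime p) := by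
  intro f hf hdeg
  set S := Localization.AtPrime p with hS
  obtain ⟨s, hs⟩ := IsLocalization.exist_integer_multiples_of_finite p.primeCompl
    (fun i : Fin (f.natDegree + 1) => f.coeff i)
  set s' : S := algebraMap R S (s : R) with hs'
  have hsunit : IsUnit s' := IsLocalization.map_units S s
  have hmem : f.scaleRoots s' ∈ Polynomial.lifts (algebraMap R S) := by
    rw [Polynomial.lifts_iff_coeff_lifts]
    intro i
    rw [Polynomial.coeff_scaleRoots]
    by_cases hi : i < f.natDegree
    · obtain ⟨b, hb⟩ := hs ⟨i, by omega⟩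
      have hb' : algebraMap R S b = algebraMap R S (s : R) * f.coeff i := by
        rw [hb]; simp [Algebra.smul_def]; rfl
      refine ⟨b * (s : R) ^ (f.natDegree - i - 1), ?_⟩
      have hpow : s' ^ (f.natDegree - i) = s' * s' ^ (f.natDegree - i - 1) := by
        rw [← pow_succ']
        congr 1
        omega
      rw [map_mul, map_pow, hb', hpow]
      ring
    · by_cases hi' : i = f.natDegree
      · subst hi'
        refine ⟨1, ?_⟩
        simp [hf.coeff_natDegree]
      · have : f.coeff i = 0 := coeff_eq_zero_of_natDegree_lt (by omega)
        exact ⟨0, by simp [this]⟩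
  have hmonic' : (f.scaleRoots s').Monic := (monic_scaleRoots_iff s').mpr hf
  obtain ⟨g, hgmap, hgdeg, hgmonic⟩ :=
    Polynomial.lifts_and_degree_eq_and_monic hmem hmonic'
  have hgnd : g.natDegree = f.natDegree := by
    rw [natDegree_eq_of_degree_eq hgdeg, natDegree_scaleRoots]
  obtain ⟨r, hr⟩ := h g hgmonic (by omega)
  have hroot : (f.scaleRoots s').eval₂ (RingHom.id S) (algebraMap R S r) = 0 := by
    show (f.scaleRoots s').eval (algebraMap R S r) = 0
    rw [← hgmap, eval_map, eval₂_hom, hr.eq_zero, map_zero]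
  obtain ⟨u, hu⟩ := hsunit
  refine ⟨(↑u⁻¹ : S) * algebraMap R S r, ?_⟩
  have key := scaleRoots_eval₂_mul (RingHom.id S) ((↑u⁻¹ : S) * algebraMap R S r) s' (p := f)
  rw [RingHom.id_apply, ← hu, ← mul_assoc, Units.mul_inv, one_mul, hu] at key
  rw [hroot] at key
  have hunit : IsUnit (s' ^ f.natDegree) := IsUnit.pow _ (hu ▸ u.isUnit)
  exact (hunit.mul_right_eq_zero).mp key.symm

lemma root_lift {S : Type*} [CommRing S] [IsLocalRing S] (h : HasMonicRoots S) :
    ∀ (n : ℕ) (f : Polynomial S), f.Monic → f.natDegree = n →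
      ∀ a₀ : IsLocalRing.ResidueField S,
        (f.map (IsLocalRing.residue S)).eval a₀ = 0 →
        ∃ a, f.IsRoot a ∧ IsLocalRing.residue S a = a₀ := by
  intro n
  induction n with
  | zero =>
    intro f hf hdeg a₀ ha₀
    rw [hf.natDegree_eq_zero.mp hdeg] at ha₀
    simp at ha₀
  | succ n ih =>
    intro f hf hdeg a₀ ha₀
    obtain ⟨a, ha⟩ := h f hf (by omega)
    set g := f /ₘ (X - C a) with hg
    have hfg : (X - C a) * g = f := (mul_divByMonic_eq_iff_isRoot).mpr ha
    have hgmonic : g.Monic := (monic_X_sub_C a).of_mul_monic_left (by rwa [hfg])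
    have hgdeg : g.natDegree = n := by
      have h1 : f.natDegree = 1 + g.natDegree := by
        rw [← hfg, (monic_X_sub_C a).natDegree_mul hgmonic, natDegree_X_sub_C]
      omega
    have hfac : f.map (IsLocalRing.residue S) =
        (X - C (IsLocalRing.residue S a)) * g.map (IsLocalRing.residue S) := by
      rw [← hfg, Polynomial.map_mul, Polynomial.map_sub, map_X, map_C]
    rw [hfac, eval_mul] at ha₀
    rcases mul_eq_zero.mp ha₀ with h1 | h2
    · refine ⟨a, ha, ?_⟩
      have : a₀ - IsLocalRing.residue S a = 0 := by simpa using h1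
      linear_combination -this
    · obtain ⟨b, hb, hb'⟩ := ih g hgmonic hgdeg a₀ h2
      exact ⟨b, by rw [IsRoot, ← hfg, eval_mul, hb.eq_zero, mul_zero], hb'⟩

lemma henselian_of_hasMonicRoots {S : Type*} [CommRing S] [IsLocalRing S]
    (h : HasMonicRoots S) : HenselianLocalRing S := by
  refine ⟨fun f hf a₀ h1 _ => ?_⟩
  have hres : (f.map (IsLocalRing.residue S)).eval (IsLocalRing.residue S a₀) = 0 := by
    rw [eval_map, eval₂_hom]
    exact (Ideal.Quotient.eq_zero_iff_mem).mpr h1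
  obtain ⟨a, ha, ha'⟩ := root_lift h f.natDegree f hf rfl (IsLocalRing.residue S a₀) hres
  refine ⟨a, ha, ?_⟩
  rw [← Ideal.Quotient.eq_zero_iff_mem]
  show IsLocalRing.residue S (a - a₀) = 0
  rw [map_sub, ha', sub_self]

lemma isAlgClosed_of_hasMonicRoots {S : Type*} [CommRing S] [IsLocalRing S]
    (h : HasMonicRoots S) : IsAlgClosed (IsLocalRing.ResidueField S) := by
  apply IsAlgClosed.of_exists_root
  intro q hq hirr
  have hmem : q ∈ Polynomial.lifts (IsLocalRing.residue S) := by
    rw [Polynomial.lifts_iff_coeff_lifts]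
    intro i
    exact IsLocalRing.residue_surjective (q.coeff i)
  obtain ⟨f, hfmap, hfdeg, hfmonic⟩ := Polynomial.lifts_and_degree_eq_and_monic hmem hq
  have hqdeg : 1 ≤ q.natDegree := by
    by_contra hcon
    have : q.natDegree = 0 := by omega
    exact hirr.not_isUnit (by rw [hq.natDegree_eq_zero.mp this]; exact isUnit_one)
  have hfnd : f.natDegree = q.natDegree := natDegree_eq_of_degree_eq hfdeg
  obtain ⟨a, ha⟩ := h f hfmonic (by omega)
  refine ⟨IsLocalRing.residue S a, ?_⟩
  rw [← hfmap, eval_map, eval₂_hom, ha.eq_zero, map_zero]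

theorem fppfLocal_localization_strictlyLocal (R : Type u) [CommRing R]
    (hR : FppfLocal R) (p : Ideal R) [p.IsPrime] :
    HenselianLocalRing (Localization.AtPrime p) ∧
    IsAlgClosed (IsLocalRing.ResidueField (Localization.AtPrime p)) := by
  have h := hasMonicRoots_localization (fppfLocal_hasMonicRoots hR) p
  exact ⟨henselian_of_hasMonicRoots h, isAlgClosed_of_hasMonicRoots h⟩
end

section
/- Let R be a local domain that is absolutely integrally closed. Then R is a henselian local ring. -/
open Polynomial

lemma aic_monic_splits {R : Type*} [CommRing R] [IsDomain R] (hR : IsAIC R) :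
    ∀ n (f : Polynomial R), f.Monic → f.natDegree = n →
      ∃ s : Multiset R, f = (s.map fun r => X - C r).prod := by
  intro n
  induction n with
  | zero =>
    intro f hf hd
    exact ⟨0, by simpa using (Polynomial.eq_one_of_monic_natDegree_zero hf hd)⟩
  | succ n ih =>
    intro f hf hd
    obtain ⟨x, hx⟩ := hR f hf
    obtain ⟨g, hg⟩ := (dvd_iff_isRoot).2 hx
    have hXC : (X - C x).Monic := monic_X_sub_C x
    have hgm : g.Monic := by
      have := hf
      rw [hg] at this
      exact (hXC.of_mul_monic_left this)
    have hdeg : g.natDegree = n := by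
      have : f.natDegree = (X - C x).natDegree + g.natDegree := by
        rw [hg]; exact natDegree_mul hXC.ne_zero hgm.ne_zero
      simp [natDegree_X_sub_C] at this
      omega
    obtain ⟨s, hs⟩ := ih g hgm hdeg
    exact ⟨x ::ₘ s, by simp [hg, hs]⟩

theorem aic_local_domain_henselian (R : Type*) [CommRing R] [IsDomain R]
    [IsLocalRing R] (hR : IsAIC R) : HenselianLocalRing R := by
  constructor
  intro f hf a₀ ha₀ _
  obtain ⟨s, hs⟩ := aic_monic_splits hR f.natDegree f hf rfl
  have : f.eval a₀ = (s.map fun r => a₀ - r).prod := by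
    rw [hs]
    simp [eval_multiset_prod, Multiset.map_map, Function.comp]
  rw [this] at ha₀
  have hprime := (IsLocalRing.maximalIdeal.isMaximal R).isPrime
  obtain ⟨y, hy, hym⟩ :=
    (hprime.multiset_prod_mem_iff_exists_mem _).1 ha₀
  obtain ⟨r, hrs, hry⟩ := Multiset.mem_map.1 hy
  refine ⟨r, ?_, ?_⟩
  · rw [hs]
    have : (X - C r) ∣ (s.map fun r => X - C r).prod :=
      Multiset.dvd_prod (Multiset.mem_map.2 ⟨r, hrs, rfl⟩)
    exact IsRoot.dvd (by simp) this
  · have : r - a₀ = -(a₀ - r) := by ring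
    rw [this, hry]
    exact (IsLocalRing.maximalIdeal R).neg_mem hym
end

section
/- Let R be a henselian local ring with separably closed residue field k, and let A, B be finite flat local R-algebras with local structure maps. Then the tensor product A ⊗_R B is a local ring. -/
open TensorProduct

section Aux

open IsLocalRing

/-- An element of a ring that has a nilpotent power is nilpotent. -/
lemma aux_isNilpotent_of_pow {S : Type*} [CommRing S] {x : S} {e : ℕ}
    (h : IsNilpotent (x ^ e)) : IsNilpotent x := by
  obtain ⟨c, hc⟩ := h
  exact ⟨e * c, by rw [pow_mul, hc]⟩

/-- In a finite algebra over a local ring, every element of the maximal ideal has a power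
in the extension of the maximal ideal of the base. -/
lemma aux_nilp (R : Type*) {A : Type*} [CommRing R] [IsLocalRing R] [CommRing A]
    [Algebra R A] [Module.Finite R A] [IsLocalRing A]
    {a : A} (ha : a ∈ maximalIdeal A) :
    ∃ n : ℕ, a ^ n ∈ (maximalIdeal R).map (algebraMap R A) := by
  set I := (maximalIdeal R).map (algebraMap R A) with hIdef
  let k := ResidueField R
  let f : k →+* A ⧸ I := Ideal.Quotient.lift (maximalIdeal R)
    ((Ideal.Quotient.mk I).comp (algebraMap R A))
    (fun r hr => by
      exact Ideal.Quotient.eq_zero_iff_mem.2 (Ideal.mem_map_of_mem (algebraMap R A) hr))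
  letI : Algebra k (A ⧸ I) := f.toAlgebra
  haveI : IsScalarTower R k (A ⧸ I) := IsScalarTower.of_algebraMap_eq' (by
    ext r
    show Ideal.Quotient.mk I (algebraMap R A r) = f (Ideal.Quotient.mk (maximalIdeal R) r)
    rfl)
  haveI : Module.Finite R (A ⧸ I) :=
    Module.Finite.of_surjective (Ideal.Quotient.mkₐ R I).toLinearMap
      (Ideal.Quotient.mkₐ_surjective R I)
  haveI : Module.Finite k (A ⧸ I) := Module.Finite.of_restrictScalars_finite R k (A ⧸ I)
  haveI : IsArtinianRing (A ⧸ I) := IsArtinianRing.of_finite k (A ⧸ I)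
  obtain ⟨n, hn⟩ := IsArtinianRing.isNilpotent_jacobson_bot (R := A ⧸ I)
  refine ⟨n, ?_⟩
  have hmem : Ideal.Quotient.mk I a ∈ Ideal.jacobson (⊥ : Ideal (A ⧸ I)) := by
    rw [Ideal.jacobson, Ideal.mem_sInf]
    rintro J ⟨-, hJ⟩
    haveI := hJ
    have h1 : (Ideal.comap (Ideal.Quotient.mk I) J).IsMaximal :=
      Ideal.comap_isMaximal_of_surjective _ Ideal.Quotient.mk_surjective
    have h2 := IsLocalRing.eq_maximalIdeal h1
    have : a ∈ Ideal.comap (Ideal.Quotient.mk I) J := by rw [h2]; exact ha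
    exact this
  have hpow : (Ideal.Quotient.mk I a) ^ n ∈ (Ideal.jacobson (⊥ : Ideal (A ⧸ I))) ^ n :=
    Ideal.pow_mem_pow hmem n
  rw [hn] at hpow
  have : Ideal.Quotient.mk I (a ^ n) = 0 := by
    rw [map_pow]
    simpa using hpow
  exact Ideal.Quotient.eq_zero_iff_mem.1 this

/-- In a finite local algebra over a local ring with separably closed residue field,
every element has a `q`-power residue congruent to a constant. -/
lemma aux_insep (R : Type*) {A : Type*} [CommRing R] [IsLocalRing R]
    [IsSepClosed (ResidueField R)] [CommRing A]
    [Algebra R A] [Module.Finite R A] [IsLocalRing A]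
    (hA : IsLocalHom (algebraMap R A)) (a : A) :
    ∃ (n : ℕ) (r : R),
      a ^ (ringExpChar (ResidueField R)) ^ n - algebraMap R A r ∈ maximalIdeal A := by
  haveI := hA
  haveI : Algebra.IsIntegral R A := Algebra.IsIntegral.of_finite R A
  haveI : Algebra.IsIntegral R (ResidueField A) := by
    have halg : algebraMap R (ResidueField A) = (residue A).comp (algebraMap R A) :=
      RingHom.ext fun r => IsLocalRing.ResidueField.map_residue (algebraMap R A) r
    refine ⟨fun x => ?_⟩
    obtain ⟨a', rfl⟩ := Ideal.Quotient.mk_surjective (I := maximalIdeal A) x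
    obtain ⟨p, pm, hp⟩ := Algebra.IsIntegral.isIntegral (R := R) a'
    refine ⟨p, pm, ?_⟩
    show Polynomial.eval₂ (algebraMap R (ResidueField A)) (residue A a') p = 0
    rw [halg, ← Polynomial.hom_eval₂, hp, map_zero]
  haveI : Algebra.IsIntegral (ResidueField R) (ResidueField A) :=
    Algebra.IsIntegral.tower_top (R := R)
  haveI : Algebra.IsAlgebraic (ResidueField R) (ResidueField A) :=
    ⟨fun x => (Algebra.IsIntegral.isIntegral x).isAlgebraic⟩
  haveI : ExpChar (ResidueField R) (ringExpChar (ResidueField R)) :=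
    ringExpChar.expChar (ResidueField R)
  obtain ⟨n, hn⟩ := IsPurelyInseparable.pow_mem (ResidueField R)
    (ringExpChar (ResidueField R)) (residue A a)
  obtain ⟨y, hy⟩ := hn
  obtain ⟨r, rfl⟩ := Ideal.Quotient.mk_surjective (I := maximalIdeal R) y
  refine ⟨n, r, ?_⟩
  rw [← Ideal.Quotient.eq_zero_iff_mem]
  have hfr : algebraMap (ResidueField R) (ResidueField A)
        (Ideal.Quotient.mk (maximalIdeal R) r)
      = Ideal.Quotient.mk (maximalIdeal A) (algebraMap R A r) :=
    IsLocalRing.ResidueField.map_residue (algebraMap R A) r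
  have hkey : Ideal.Quotient.mk (maximalIdeal A)
        (a ^ (ringExpChar (ResidueField R)) ^ n - algebraMap R A r)
      = (residue A a) ^ (ringExpChar (ResidueField R)) ^ n
        - algebraMap (ResidueField R) (ResidueField A)
            (Ideal.Quotient.mk (maximalIdeal R) r) := by
    rw [map_sub, map_pow, hfr]
    rfl
  rw [hkey, hy, sub_self]
  rfl

end Aux

set_option maxHeartbeats 1000000 in
set_option synthInstance.maxHeartbeats 400000 in
open IsLocalRing in
theorem tensorProduct_of_finite_flat_local_isLocalRing
    (R : Type*) [CommRing R] [HenselianLocalRing R]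
    [IsSepClosed (IsLocalRing.ResidueField R)]
    (A B : Type*) [CommRing A] [CommRing B] [Algebra R A] [Algebra R B]
    [Module.Finite R A] [Module.Flat R A] [Module.Finite R B] [Module.Flat R B]
    [IsLocalRing A] [IsLocalRing B]
    (hA : IsLocalHom (algebraMap R A)) (hB : IsLocalHom (algebraMap R B)) :
    IsLocalRing (A ⊗[R] B) := by
  classical
  set k := ResidueField R
  set q := ringExpChar k with hq
  set C := A ⊗[R] B with hC
  -- `C` is a finite, hence integral, `R`-algebra
  haveI : Module.Finite R C := Module.Finite.tensorProduct R A B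
  haveI : Algebra.IsIntegral R C := Algebra.IsIntegral.of_finite R C
  -- `B` is faithfully flat, hence `C` is nontrivial
  haveI : Module.FaithfullyFlat R B := by
    refine ⟨fun mm hmm h => ?_⟩
    have hmmeq := IsLocalRing.eq_maximalIdeal hmm
    subst hmmeq
    have hle : (maximalIdeal R) • (⊤ : Submodule R B)
        ≤ (maximalIdeal B).restrictScalars R := by
      refine Submodule.smul_le.2 fun r hr b _ => ?_
      have h1 : algebraMap R B r ∈ maximalIdeal B := by
        rw [IsLocalRing.mem_maximalIdeal, mem_nonunits_iff]
        intro hu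
        exact (mem_nonunits_iff.1 hr) (hB.map_nonunit r hu)
      have := (maximalIdeal B).mul_mem_right b h1
      rwa [← Algebra.smul_def] at this
    rw [h] at hle
    have h1 : (1 : B) ∈ maximalIdeal B := hle Submodule.mem_top
    exact (mem_nonunits_iff.1 (IsLocalRing.mem_maximalIdeal (1 : B) |>.1 h1)) isUnit_one
  haveI : Nontrivial C := Module.FaithfullyFlat.rTensor_nontrivial R B A
  set M := (maximalIdeal R).map (algebraMap R C) with hM
  -- every maximal ideal of `C` contains `M`
  have hMle : ∀ I : Ideal C, I.IsMaximal → M ≤ I := by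
    intro I hI
    haveI := hI
    have h1 : (Ideal.comap (algebraMap R C) I).IsMaximal :=
      Ideal.isMaximal_comap_of_isIntegral_of_isMaximal I
    have h2 := IsLocalRing.eq_maximalIdeal h1
    exact Ideal.map_le_iff_le_comap.2 (le_of_eq h2.symm)
  have hMne : M ≠ ⊤ := by
    obtain ⟨I, hI⟩ := Ideal.exists_maximal C
    exact fun h => hI.ne_top (top_le_iff.1 (h ▸ hMle I hI))
  set C₁ := C ⧸ M with hC₁
  haveI : Nontrivial C₁ := Ideal.Quotient.nontrivial_iff.mpr hMne
  set π : C →+* C₁ := Ideal.Quotient.mk M with hπ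
  -- `C₁` has exponential characteristic `q`
  let f : k →+* C₁ := Ideal.Quotient.lift (maximalIdeal R) (π.comp (algebraMap R C))
    (fun r hr => by
      exact Ideal.Quotient.eq_zero_iff_mem.2 (Ideal.mem_map_of_mem (algebraMap R C) hr))
  haveI : ExpChar k q := ringExpChar.expChar k
  haveI hCq : ExpChar C₁ q := expChar_of_injective_ringHom f.injective q
  have hq0 : q ≠ 0 := (expChar_pos k q).ne'
  -- inclusion lemmas
  have h_inclR : ∀ b : B, b ∈ (maximalIdeal R).map (algebraMap R B) →
      ((1 : A) ⊗ₜ[R] b : C) ∈ M := by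
    intro b hb
    have h1 : (Algebra.TensorProduct.includeRight : B →ₐ[R] C).toRingHom b
        ∈ ((maximalIdeal R).map (algebraMap R B)).map
          (Algebra.TensorProduct.includeRight : B →ₐ[R] C).toRingHom :=
      Ideal.mem_map_of_mem _ hb
    rw [Ideal.map_map] at h1
    have hcomp : ((Algebra.TensorProduct.includeRight : B →ₐ[R] C).toRingHom).comp
        (algebraMap R B) = algebraMap R C := by
      ext r
      show (1 : A) ⊗ₜ[R] (algebraMap R B r) = algebraMap R C r
      rw [Algebra.algebraMap_eq_smul_one, Algebra.TensorProduct.algebraMap_apply,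
        Algebra.algebraMap_eq_smul_one, ← TensorProduct.smul_tmul]
    rwa [hcomp] at h1
  have h_inclL : ∀ a : A, a ∈ (maximalIdeal R).map (algebraMap R A) →
      (a ⊗ₜ[R] (1 : B) : C) ∈ M := by
    intro a ha
    have h1 : (Algebra.TensorProduct.includeLeft : A →ₐ[R] C).toRingHom a
        ∈ ((maximalIdeal R).map (algebraMap R A)).map
          (Algebra.TensorProduct.includeLeft : A →ₐ[R] C).toRingHom :=
      Ideal.mem_map_of_mem _ ha
    rw [Ideal.map_map] at h1
    have hcomp : ((Algebra.TensorProduct.includeLeft : A →ₐ[R] C).toRingHom).comp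
        (algebraMap R A) = algebraMap R C := by
      ext r
      rfl
    rwa [hcomp] at h1
  -- main elementwise claim
  have P : ∀ x : C, ∃ (N : ℕ) (b : B), IsNilpotent (π x ^ q ^ N - π ((1 : A) ⊗ₜ[R] b)) := by
    intro x
    induction x using TensorProduct.induction_on with
    | zero =>
      refine ⟨0, 0, ?_⟩
      simp only [TensorProduct.tmul_zero, map_zero, pow_zero, pow_one, sub_zero]
      exact IsNilpotent.zero
    | tmul a b0 =>
      obtain ⟨n, r, hd⟩ := aux_insep R hA a
      set d := a ^ q ^ n - algebraMap R A r with hddef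
      obtain ⟨s, hs⟩ := aux_nilp R hd
      refine ⟨n, r • b0 ^ q ^ n, ⟨s, ?_⟩⟩
      have e0 : (algebraMap R A r) ⊗ₜ[R] (b0 ^ q ^ n) = (1 : A) ⊗ₜ[R] (r • b0 ^ q ^ n) := by
        rw [Algebra.algebraMap_eq_smul_one, ← TensorProduct.smul_tmul]
      have e1 : (a ⊗ₜ[R] b0 : C) ^ q ^ n - (1 : A) ⊗ₜ[R] (r • b0 ^ q ^ n)
          = d ⊗ₜ[R] (b0 ^ q ^ n) := by
        rw [Algebra.TensorProduct.tmul_pow, ← e0,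
          show a ^ q ^ n = algebraMap R A r + d by rw [hddef]; ring,
          TensorProduct.add_tmul]
        ring
      have e2 : ((d ⊗ₜ[R] (b0 ^ q ^ n) : C)) ^ s ∈ M := by
        rw [Algebra.TensorProduct.tmul_pow]
        have h1 : ((d ^ s) ⊗ₜ[R] (1 : B) : C) ∈ M := h_inclL _ hs
        have h2 := M.mul_mem_right ((1 : A) ⊗ₜ[R] ((b0 ^ q ^ n) ^ s)) h1
        rwa [Algebra.TensorProduct.tmul_mul_tmul, mul_one, one_mul] at h2
      rw [← map_pow, ← map_sub, ← map_pow, e1]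
      exact Ideal.Quotient.eq_zero_iff_mem.2 e2
    | add x y hx hy =>
      obtain ⟨N₁, b₁, h₁⟩ := hx
      obtain ⟨N₂, b₂, h₂⟩ := hy
      refine ⟨N₁ + N₂, b₁ ^ q ^ N₂ + b₂ ^ q ^ N₁, ?_⟩
      have hb1 : π ((1 : A) ⊗ₜ[R] b₁) ^ q ^ N₂ = π ((1 : A) ⊗ₜ[R] (b₁ ^ q ^ N₂)) := by
        rw [← map_pow, Algebra.TensorProduct.tmul_pow, one_pow]
      have hb2 : π ((1 : A) ⊗ₜ[R] b₂) ^ q ^ N₁ = π ((1 : A) ⊗ₜ[R] (b₂ ^ q ^ N₁)) := by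
        rw [← map_pow, Algebra.TensorProduct.tmul_pow, one_pow]
      have key : π (x + y) ^ q ^ (N₁ + N₂) - π ((1 : A) ⊗ₜ[R] (b₁ ^ q ^ N₂ + b₂ ^ q ^ N₁))
          = (π x ^ q ^ N₁ - π ((1 : A) ⊗ₜ[R] b₁)) ^ q ^ N₂
            + (π y ^ q ^ N₂ - π ((1 : A) ⊗ₜ[R] b₂)) ^ q ^ N₁ := by
        rw [sub_pow_expChar_pow, sub_pow_expChar_pow, hb1, hb2, map_add,
          add_pow_expChar_pow, TensorProduct.tmul_add, map_add,
          ← pow_mul, ← pow_mul, ← pow_add, ← pow_add, Nat.add_comm N₂ N₁]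
        ring
      rw [key]
      exact Commute.isNilpotent_add (Commute.all _ _)
        (h₁.pow_of_pos (pow_ne_zero _ hq0)) (h₂.pow_of_pos (pow_ne_zero _ hq0))
  -- dichotomy in `C₁`
  have key2 : ∀ z : C₁, IsNilpotent z ∨ IsUnit z := by
    intro z
    obtain ⟨x, rfl⟩ := Ideal.Quotient.mk_surjective (I := M) z
    obtain ⟨N, b, hnil⟩ := P x
    by_cases hb : IsUnit b
    · right
      have hu : IsUnit (π ((1 : A) ⊗ₜ[R] b)) := by
        have := hb.map (π.comp (Algebra.TensorProduct.includeRight : B →ₐ[R] C).toRingHom)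
        exact this
      have : IsUnit (π ((1 : A) ⊗ₜ[R] b) + (π x ^ q ^ N - π ((1 : A) ⊗ₜ[R] b))) :=
        hnil.isUnit_add_left_of_commute hu (Commute.all _ _)
      rw [add_sub_cancel] at this
      exact (isUnit_pow_iff (pow_ne_zero N hq0)).1 this
    · left
      have hbm : b ∈ maximalIdeal B := by
        rw [IsLocalRing.mem_maximalIdeal, mem_nonunits_iff]
        exact hb
      obtain ⟨nb, hnb⟩ := aux_nilp R hbm
      have hnil2 : IsNilpotent (π ((1 : A) ⊗ₜ[R] b)) := by
        refine ⟨nb, ?_⟩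
        rw [← map_pow, Algebra.TensorProduct.tmul_pow, one_pow]
        exact Ideal.Quotient.eq_zero_iff_mem.2 (h_inclR _ hnb)
      have : IsNilpotent (π x ^ q ^ N) := by
        have := Commute.isNilpotent_add (Commute.all _ _) hnil hnil2
        rwa [sub_add_cancel] at this
      exact IsNilpotent.of_pow this
  -- `C₁` is local
  haveI : IsLocalRing C₁ := by
    refine IsLocalRing.of_nonunits_add fun a b ha hb => ?_
    have hna : IsNilpotent a := (key2 a).resolve_right (mem_nonunits_iff.1 ha)
    have hnb : IsNilpotent b := (key2 b).resolve_right (mem_nonunits_iff.1 hb)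
    have : IsNilpotent (a + b) := Commute.isNilpotent_add (Commute.all _ _) hna hnb
    exact mem_nonunits_iff.2 fun hu => hu.not_isNilpotent this
  -- conclude
  obtain ⟨I₀, hI₀⟩ := Ideal.exists_maximal C
  have huniq : ∀ I : Ideal C, I.IsMaximal →
      I = Ideal.comap π (maximalIdeal C₁) := by
    intro I hI
    have hMI : M ≤ I := hMle I hI
    have hcm : Ideal.comap π (Ideal.map π I) = I := by
      rw [Ideal.comap_map_of_surjective π Ideal.Quotient.mk_surjective]
      refine sup_eq_left.2 ?_
      intro x hx
      have : x ∈ M := by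
        rw [← Ideal.mk_ker (I := M)]
        exact hx
      exact hMI this
    have hne : Ideal.map π I ≠ ⊤ := by
      intro h
      rw [h, Ideal.comap_top] at hcm
      exact hI.ne_top hcm.symm
    have hle2 : Ideal.map π I ≤ maximalIdeal C₁ := IsLocalRing.le_maximalIdeal hne
    have hIle : I ≤ Ideal.comap π (maximalIdeal C₁) := by
      rw [← hcm]
      exact Ideal.comap_mono hle2
    refine hI.eq_of_le ?_ hIle
    intro h
    have h1 : (1 : C₁) ∈ maximalIdeal C₁ := by
      have h2 : (1 : C) ∈ Ideal.comap π (maximalIdeal C₁) := h ▸ trivial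
      rw [Ideal.mem_comap, map_one] at h2
      exact h2
    exact (mem_nonunits_iff.1 (IsLocalRing.mem_maximalIdeal (1 : C₁) |>.1 h1)) isUnit_one
  exact IsLocalRing.of_unique_max_ideal
    ⟨I₀, hI₀, fun J hJ => (huniq J hJ).trans (huniq I₀ hI₀).symm⟩
end
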